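/- There exist constants β > 0 and ℓ₀ > 0 such that for every ℓ ≥ ℓ₀ and every continuously differentiable f : [0,ℓ] → ℝ with f(0) = 0 and ∫₀^ℓ f(s) tanh(s) cosh⁻²(s) ds = 0, the derivative is controlled by the Robin energy: (1 − 2/(2+β)) ∫₀^ℓ f'(s)² ds ≤ 2 e_ℓ(f). -/

import Mathlib

open Real Set MeasureTheory intervalIntegral

lemma aux_tanh_pos {x : ℝ} (hx : 0 < x) : 0 < Real.tanh x := by
  rw [Real.tanh_eq_sinh_div_cosh]
  exact div_pos (Real.sinh_pos_iff.2 hx) (Real.cosh_pos x)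

lemma aux_tanh_nonneg {x : ℝ} (hx : 0 ≤ x) : 0 ≤ Real.tanh x := by
  rcases hx.eq_or_lt with h | h
  · simp [← h]
  · exact (aux_tanh_pos h).le

lemma aux_tanh_le_one (x : ℝ) : Real.tanh x ≤ 1 := by
  rw [Real.tanh_eq_sinh_div_cosh]
  exact (div_le_one (Real.cosh_pos x)).2 (Real.sinh_lt_cosh x).le

lemma aux_self_le_sinh {x : ℝ} (hx : 0 < x) : x ≤ Real.sinh x :=
  (Real.self_lt_sinh_iff.2 hx).le

lemma aux_exp_le_cosh (x : ℝ) : Real.exp x / 2 ≤ Real.cosh x := by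
  rw [Real.cosh_eq]
  have := (Real.exp_pos (-x)).le
  linarith

lemma hasDerivAt_tanh' (x : ℝ) : HasDerivAt Real.tanh ((Real.cosh x ^ 2)⁻¹) x := by
  have h : Real.tanh = fun y => Real.sinh y / Real.cosh y :=
    funext fun y => Real.tanh_eq_sinh_div_cosh y
  rw [h]
  have hd := (Real.hasDerivAt_sinh x).div (Real.hasDerivAt_cosh x) (ne_of_gt (Real.cosh_pos x))
  refine hd.congr_deriv ?_
  have hc := Real.cosh_sq_sub_sinh_sq x
  field_simp
  nlinarith [hc]


lemma hasDerivAt_w_anti (x : ℝ) : HasDerivAt (fun s => Real.tanh s ^ 3 / 3)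
    (Real.tanh x ^ 2 * (Real.cosh x ^ 2)⁻¹) x := by
  have := ((hasDerivAt_tanh' x).pow 3).div_const 3
  refine this.congr_deriv ?_
  ring

lemma hasDerivAt_t2 (x : ℝ) : HasDerivAt (fun s => Real.tanh s ^ 2 / 2)
    (Real.tanh x * (Real.cosh x ^ 2)⁻¹) x := by
  have := ((hasDerivAt_tanh' x).pow 2).div_const 2
  refine this.congr_deriv ?_
  ring

lemma hasDerivAt_xsech (x : ℝ) : HasDerivAt (fun s => s * Real.tanh s - Real.log (Real.cosh s))
    (x * (Real.cosh x ^ 2)⁻¹) x := by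
  have h1 : HasDerivAt (fun s : ℝ => s * Real.tanh s)
      (1 * Real.tanh x + x * (Real.cosh x ^ 2)⁻¹) x :=
    (hasDerivAt_id x).mul (hasDerivAt_tanh' x)
  have h2 : HasDerivAt (fun s => Real.log (Real.cosh s)) (Real.sinh x / Real.cosh x) x := by
    have := (Real.hasDerivAt_cosh x).log (ne_of_gt (Real.cosh_pos x))
    convert this using 1
  have := h1.sub h2
  refine this.congr_deriv ?_
  rw [← Real.tanh_eq_sinh_div_cosh]
  ring

lemma hasDerivAt_R {x : ℝ} (hx : 0 < x) :
    HasDerivAt (fun s => s - Real.cosh s / Real.sinh s) ((Real.cosh x / Real.sinh x) ^ 2) x := by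
  have hs : Real.sinh x ≠ 0 := ne_of_gt (Real.sinh_pos_iff.2 hx)
  have h2 := (Real.hasDerivAt_cosh x).div (Real.hasDerivAt_sinh x) hs
  have := (hasDerivAt_id x).sub h2
  refine this.congr_deriv ?_
  have hc := Real.cosh_sq_sub_sinh_sq x
  field_simp
  nlinarith [hc]


lemma continuous_tanh' : Continuous Real.tanh := by
  have h : Real.tanh = fun y => Real.sinh y / Real.cosh y :=
    funext fun y => Real.tanh_eq_sinh_div_cosh y
  rw [h]
  exact Real.continuous_sinh.div Real.continuous_cosh fun x => ne_of_gt (Real.cosh_pos x)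

lemma cont_sech2 : Continuous fun s : ℝ => (Real.cosh s ^ 2)⁻¹ :=
  (Real.continuous_cosh.pow 2).inv₀ fun x => (pow_pos (Real.cosh_pos x) 2).ne'

lemma integral_w {ℓ : ℝ} :
    ∫ s in (0:ℝ)..ℓ, Real.tanh s ^ 2 * (Real.cosh s ^ 2)⁻¹ = Real.tanh ℓ ^ 3 / 3 := by
  have := integral_eq_sub_of_hasDerivAt (f := fun s => Real.tanh s ^ 3 / 3)
    (f' := fun s => Real.tanh s ^ 2 * (Real.cosh s ^ 2)⁻¹)
    (fun x _ => hasDerivAt_w_anti x)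
    (((continuous_tanh'.pow 2).mul cont_sech2).intervalIntegrable 0 ℓ)
  rw [this]
  simp

lemma integral_tsech {ℓ : ℝ} :
    ∫ s in (0:ℝ)..ℓ, Real.tanh s * (Real.cosh s ^ 2)⁻¹ = Real.tanh ℓ ^ 2 / 2 := by
  have := integral_eq_sub_of_hasDerivAt (f := fun s => Real.tanh s ^ 2 / 2)
    (f' := fun s => Real.tanh s * (Real.cosh s ^ 2)⁻¹)
    (fun x _ => hasDerivAt_t2 x)
    ((continuous_tanh'.mul cont_sech2).intervalIntegrable 0 ℓ)
  rw [this]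
  simp

lemma integral_xsech_le {ℓ : ℝ} (hl : 0 ≤ ℓ) :
    ∫ s in (0:ℝ)..ℓ, s * (Real.cosh s ^ 2)⁻¹ ≤ 1 := by
  have heq := integral_eq_sub_of_hasDerivAt (f := fun s => s * Real.tanh s - Real.log (Real.cosh s))
    (f' := fun s => s * (Real.cosh s ^ 2)⁻¹)
    (fun x _ => hasDerivAt_xsech x)
    ((continuous_id.mul cont_sech2).intervalIntegrable 0 ℓ)
  rw [heq]
  simp only [zero_mul, Real.cosh_zero, Real.log_one, sub_zero, Real.tanh_zero, mul_zero]
  have h1 : ℓ * Real.tanh ℓ ≤ ℓ := by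
    nlinarith [aux_tanh_le_one ℓ, aux_tanh_nonneg hl]
  have h2 : ℓ - Real.log 2 ≤ Real.log (Real.cosh ℓ) := by
    have := aux_exp_le_cosh ℓ
    have h3 : Real.log (Real.exp ℓ / 2) ≤ Real.log (Real.cosh ℓ) :=
      Real.log_le_log (by positivity) this
    rw [Real.log_div (Real.exp_ne_zero ℓ) (by norm_num), Real.log_exp] at h3
    linarith
  have hlog2 : Real.log 2 ≤ 1 := by
    have := Real.log_two_lt_d9
    linarith
  linarith

lemma integral_coth_sq {y x : ℝ} (hy : 0 < y) (hyx : y ≤ x) :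
    ∫ s in y..x, (Real.cosh s / Real.sinh s) ^ 2
      = (x - Real.cosh x / Real.sinh x) - (y - Real.cosh y / Real.sinh y) := by
  have hcont : ContinuousOn (fun s => (Real.cosh s / Real.sinh s) ^ 2) (uIcc y x) := by
    apply ContinuousOn.pow
    apply ContinuousOn.div Real.continuous_cosh.continuousOn Real.continuous_sinh.continuousOn
    intro s hs
    rw [uIcc_of_le hyx] at hs
    exact ne_of_gt (Real.sinh_pos_iff.2 (lt_of_lt_of_le hy hs.1))
  exact integral_eq_sub_of_hasDerivAt
    (fun s hs => hasDerivAt_R (lt_of_lt_of_le hy ((uIcc_of_le hyx ▸ hs).1)))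
    (hcont.intervalIntegrable)

lemma cs_interval {a b : ℝ} (hab : a ≤ b) {U V : ℝ → ℝ}
    (hU : IntervalIntegrable (fun s => U s ^ 2) volume a b)
    (hV : IntervalIntegrable (fun s => V s ^ 2) volume a b)
    (hUV : IntervalIntegrable (fun s => U s * V s) volume a b) :
    (∫ s in a..b, U s * V s) ^ 2
      ≤ (∫ s in a..b, U s ^ 2) * ∫ s in a..b, V s ^ 2 := by
  set p := ∫ s in a..b, U s ^ 2 with hp
  set q := ∫ s in a..b, V s ^ 2 with hq
  set r := ∫ s in a..b, U s * V s with hr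
  have key : ∀ t : ℝ, 0 ≤ q * (t * t) + (2 * r) * t + p := by
    intro t
    have h0 : 0 ≤ ∫ s in a..b, (U s + t * V s) ^ 2 :=
      integral_nonneg hab fun u _ => sq_nonneg _
    have h1 : (fun s => (U s + t * V s) ^ 2)
        = fun s => U s ^ 2 + ((2 * t) * (U s * V s) + (t * t) * V s ^ 2) := by
      funext s; ring
    rw [h1, integral_add hU ((hUV.const_mul _).add (hV.const_mul _)),
      integral_add (hUV.const_mul _) (hV.const_mul _),
      intervalIntegral.integral_const_mul, intervalIntegral.integral_const_mul] at h0
    rw [← hp, ← hq, ← hr] at h0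
    linarith
  have := discrim_le_zero key
  rw [discrim] at this
  nlinarith [this]


lemma intervalIntegrable_congr_Icc {a b : ℝ} (hab : a ≤ b) {F G : ℝ → ℝ}
    (hFG : ∀ x ∈ Icc a b, F x = G x) (hG : IntervalIntegrable G volume a b) :
    IntervalIntegrable F volume a b := by
  rw [intervalIntegrable_iff_integrableOn_Ioc_of_le hab] at hG ⊢
  exact hG.congr_fun (fun x hx => (hFG x (Ioc_subset_Icc_self hx)).symm) measurableSet_Ioc


set_option maxHeartbeats 2000000 in
/-- Control of the derivative by the Robin energy: there are `β > 0`, `ℓ₀ > 0` so that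
for every `ℓ ≥ ℓ₀` and every `C¹` function `f` on `[0,ℓ]` with `f(0) = 0` and
`∫₀^ℓ f tanh cosh⁻² = 0`, one has `(1 − 2/(2+β)) ∫ f'² ≤ 2 e_ℓ(f)`, where
`e_ℓ(f) = ∫ f'² − 2∫ f² cosh⁻² − f(ℓ)² cosh⁻²(ℓ)/tanh(ℓ)`. -/
theorem derivative_controlled_by_robin_energy :
    ∃ β > (0:ℝ), ∃ ℓ₀ > (0:ℝ), ∀ ℓ ≥ ℓ₀, ∀ f : ℝ → ℝ, ContDiff ℝ 1 f →
      f 0 = 0 →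
      (∫ s in (0:ℝ)..ℓ, f s * Real.tanh s * ((Real.cosh s)^2)⁻¹) = 0 →
      (1 - 2 / (2 + β)) * ∫ s in (0:ℝ)..ℓ, (deriv f s)^2
        ≤ 2 * ((∫ s in (0:ℝ)..ℓ, (deriv f s)^2)
            - 2 * (∫ s in (0:ℝ)..ℓ, (f s)^2 * ((Real.cosh s)^2)⁻¹)
            - (f ℓ)^2 * ((Real.cosh ℓ)^2)⁻¹ / Real.tanh ℓ) := by
  refine ⟨1/100, by norm_num, 32, by norm_num, ?_⟩
  intro ℓ hl f hC1 hf0 horth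
  have hl0 : (0:ℝ) < ℓ := lt_of_lt_of_le (by norm_num) hl
  have hl0' : (0:ℝ) ≤ ℓ := hl0.le
  have hfc : Continuous f := hC1.continuous
  have hdfc : Continuous (deriv f) := hC1.continuous_deriv le_rfl
  have hfd : ∀ x : ℝ, HasDerivAt f (deriv f x) x :=
    fun x => (hC1.differentiable one_ne_zero x).hasDerivAt
  -- notation
  set h : ℝ → ℝ := fun s => deriv f s - f s * ((Real.cosh s ^ 2)⁻¹ / Real.tanh s) with hh
  set g : ℝ → ℝ := fun s => f s / Real.tanh s with hg
  set w : ℝ → ℝ := fun s => Real.tanh s ^ 2 * (Real.cosh s ^ 2)⁻¹ with hw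
  set A := ∫ s in (0:ℝ)..ℓ, (deriv f s)^2 with hA
  set B := ∫ s in (0:ℝ)..ℓ, (f s)^2 * ((Real.cosh s)^2)⁻¹ with hB
  set E := ∫ s in (0:ℝ)..ℓ, (h s)^2 with hE
  set m := Real.tanh ℓ ^ 3 / 3 with hm
  -- bound on deriv f and f
  obtain ⟨M, hM0, hMd, hMf⟩ : ∃ M : ℝ, 0 ≤ M ∧ (∀ s ∈ Icc (0:ℝ) ℓ, |deriv f s| ≤ M) ∧
      (∀ s ∈ Icc (0:ℝ) ℓ, |f s| ≤ M * s) := by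
    obtain ⟨M0, hM0b⟩ := (isCompact_Icc : IsCompact (Icc (0:ℝ) ℓ)).exists_bound_of_continuousOn
      hdfc.continuousOn
    refine ⟨max M0 0, le_max_right _ _, ?_, ?_⟩
    · intro s hs
      have := hM0b s hs
      rw [Real.norm_eq_abs] at this
      exact le_trans this (le_max_left _ _)
    · intro s hs
      have hfs : f s = ∫ t in (0:ℝ)..s, deriv f t := by
        have := integral_eq_sub_of_hasDerivAt (f := f) (f' := deriv f)
          (fun t _ => hfd t) ((hdfc.intervalIntegrable 0 s))
        rw [this, hf0, sub_zero]
      have hbound : ∀ t ∈ Set.uIoc (0:ℝ) s, ‖deriv f t‖ ≤ max M0 0 := by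
        intro t ht
        have ht' : t ∈ Icc (0:ℝ) ℓ := by
          rcases Set.mem_uIoc.1 ht with ⟨h1, h2⟩ | ⟨h1, h2⟩
          · exact ⟨le_of_lt h1, le_trans h2 hs.2⟩
          · constructor
            · linarith [hs.1]
            · linarith [hs.2]
        rw [Real.norm_eq_abs]
        exact le_trans (hM0b t ht') (le_max_left _ _)
      have := norm_integral_le_of_norm_le_const hbound
      rw [← hfs, Real.norm_eq_abs] at this
      calc |f s| ≤ max M0 0 * |s - 0| := this
        _ = max M0 0 * s := by rw [sub_zero, abs_of_nonneg hs.1]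
  -- bound on h
  have hhb : ∀ s ∈ Ioc (0:ℝ) ℓ, |h s| ≤ 2 * M := by
    intro s hs
    obtain ⟨hs0, hsl⟩ := hs
    have ht := aux_tanh_pos hs0
    have hsi := Real.sinh_pos_iff.2 hs0
    have hco := Real.cosh_pos s
    have hq : ((Real.cosh s ^ 2)⁻¹ / Real.tanh s) = (Real.cosh s * Real.sinh s)⁻¹ := by
      rw [Real.tanh_eq_sinh_div_cosh]
      field_simp
    have hq2 : (Real.cosh s * Real.sinh s)⁻¹ ≤ s⁻¹ := by
      apply inv_anti₀ hs0
      nlinarith [aux_self_le_sinh hs0, Real.one_le_cosh s]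
    have hq0 : (0:ℝ) ≤ (Real.cosh s * Real.sinh s)⁻¹ := by positivity
    have hfs : |f s| ≤ M * s := hMf s ⟨hs0.le, hsl⟩
    have hds : |deriv f s| ≤ M := hMd s ⟨hs0.le, hsl⟩
    have h2 : |f s * ((Real.cosh s ^ 2)⁻¹ / Real.tanh s)| ≤ M := by
      rw [hq, abs_mul, abs_of_nonneg hq0]
      calc |f s| * (Real.cosh s * Real.sinh s)⁻¹ ≤ (M * s) * s⁻¹ := by
            apply mul_le_mul hfs hq2 hq0 (by positivity)
        _ = M := by field_simp
    calc |h s| ≤ |deriv f s| + |f s * ((Real.cosh s ^ 2)⁻¹ / Real.tanh s)| := abs_sub _ _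
      _ ≤ M + M := add_le_add hds h2
      _ = 2 * M := by ring
  -- h measurable
  have hhm : Measurable h :=
    hdfc.measurable.sub (hfc.measurable.mul
      (cont_sech2.measurable.div continuous_tanh'.measurable))
  -- h^2 interval integrable
  have hEint : IntervalIntegrable (fun s => (h s)^2) volume 0 ℓ := by
    rw [intervalIntegrable_iff_integrableOn_Ioc_of_le hl0']
    apply Integrable.mono' (g := fun _ => (2*M)^2)
      (integrableOn_const measure_Ioc_lt_top.ne)
      ((hhm.pow_const 2).aestronglyMeasurable)
    rw [ae_restrict_iff' measurableSet_Ioc]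
    apply ae_of_all
    intro s hs
    have := hhb s hs
    rw [Real.norm_eq_abs, abs_pow]
    exact pow_le_pow_left₀ (abs_nonneg _) this 2
  have hE0 : 0 ≤ E := integral_nonneg hl0' fun u _ => sq_nonneg _
  -- continuity of h away from 0
  have hhcont : ContinuousOn h (Ioi (0:ℝ)) := by
    apply ContinuousOn.sub hdfc.continuousOn
    apply ContinuousOn.mul hfc.continuousOn
    exact ContinuousOn.div cont_sech2.continuousOn continuous_tanh'.continuousOn
      fun s hs => ne_of_gt (aux_tanh_pos hs)
  -- identity : E = A - 2B - C
  have hid : E = A - 2*B - (f ℓ)^2 * ((Real.cosh ℓ)^2)⁻¹ / Real.tanh ℓ := by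
    set F : ℝ → ℝ := fun s => f s ^ 2 * ((Real.cosh s ^ 2)⁻¹ / Real.tanh s) with hF
    set φ : ℝ → ℝ := fun s => (deriv f s)^2 - (h s)^2 - 2 * (f s ^ 2 * (Real.cosh s ^ 2)⁻¹)
      with hφ
    have hq1 : ∀ s : ℝ, 0 < s →
        ((Real.cosh s ^ 2)⁻¹ / Real.tanh s) = (Real.cosh s * Real.sinh s)⁻¹ := by
      intro s hs
      have := aux_tanh_pos hs
      have := Real.sinh_pos_iff.2 hs
      have := Real.cosh_pos s
      rw [Real.tanh_eq_sinh_div_cosh]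
      field_simp
    have hq2 : ∀ s : ℝ, 0 < s → (Real.cosh s * Real.sinh s)⁻¹ ≤ s⁻¹ := by
      intro s hs
      apply inv_anti₀ hs
      nlinarith [aux_self_le_sinh hs, Real.one_le_cosh s]
    have hFcont : ContinuousOn F (Icc 0 ℓ) := by
      intro x hx
      rcases eq_or_lt_of_le hx.1 with h0 | h0
      · have hF0 : F 0 = 0 := by simp [hF, hf0]
        rw [← h0]
        unfold ContinuousWithinAt
        rw [hF0]
        apply squeeze_zero' (g := fun t => M^2 * t)
        · apply eventually_nhdsWithin_of_forall
          intro t ht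
          exact mul_nonneg (sq_nonneg _)
            (div_nonneg (by positivity) (aux_tanh_nonneg ht.1))
        · apply eventually_nhdsWithin_of_forall
          intro t ht
          rcases eq_or_lt_of_le ht.1 with h0' | h0'
          · rw [← h0']
            simp [hF, hf0]
          · have hft : |f t| ≤ M * t := hMf t ht
            have hf2 : f t ^ 2 ≤ (M*t)^2 := by
              rw [← sq_abs (f t)]
              exact pow_le_pow_left₀ (abs_nonneg _) hft 2
            have hq0 : (0:ℝ) ≤ (Real.cosh t * Real.sinh t)⁻¹ := by
              have := Real.sinh_pos_iff.2 h0'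
              have := Real.cosh_pos t
              positivity
            calc F t = f t ^ 2 * (Real.cosh t * Real.sinh t)⁻¹ := by rw [hF]; simp only; rw [hq1 t h0']
              _ ≤ (M*t)^2 * t⁻¹ :=
                  mul_le_mul hf2 (hq2 t h0') hq0 (by positivity)
              _ = M^2 * t := by field_simp
        · have hten : Filter.Tendsto (fun t : ℝ => M^2 * t) (nhds 0) (nhds (M^2 * 0)) :=
            (continuous_const.mul continuous_id).tendsto 0
          simpa using hten.mono_left nhdsWithin_le_nhds
      · apply ContinuousAt.continuousWithinAt
        rw [hF]
        exact (hfc.continuousAt.pow 2).mul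
          ((cont_sech2.continuousAt).div (continuous_tanh'.continuousAt)
            (ne_of_gt (aux_tanh_pos h0)))
    have hFder : ∀ x ∈ Ioo (0:ℝ) ℓ, HasDerivAt F (φ x) x := by
      intro x hx
      have hx0 := hx.1
      have ht := aux_tanh_pos hx0
      have hsi := Real.sinh_pos_iff.2 hx0
      have hco := Real.cosh_pos x
      have hc2 : Real.cosh x ^ 2 ≠ 0 := by positivity
      have hinv := ((Real.hasDerivAt_cosh x).pow 2).inv hc2
      have hqd := hinv.div (hasDerivAt_tanh' x) (ne_of_gt ht)
      have hFd := ((hfd x).pow 2).mul hqd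
      rw [hF]
      refine hFd.congr_deriv ?_
      rw [hφ, hh]
      simp only [Pi.pow_apply, Pi.inv_apply, Pi.div_apply]
      rw [Real.tanh_eq_sinh_div_cosh]
      field_simp
      ring
    have hconta : Continuous fun s => (deriv f s)^2 := hdfc.pow 2
    have hcontb : Continuous fun s => 2 * (f s ^ 2 * (Real.cosh s ^ 2)⁻¹) :=
      continuous_const.mul ((hfc.pow 2).mul cont_sech2)
    have hφint : IntervalIntegrable φ volume 0 ℓ := by
      rw [hφ]
      exact ((hconta.intervalIntegrable 0 ℓ).sub hEint).sub (hcontb.intervalIntegrable 0 ℓ)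
    have hkey := integral_eq_sub_of_hasDerivAt_of_le hl0' hFcont hFder hφint
    have hF0 : F 0 = 0 := by simp [hF, hf0]
    rw [hF0, sub_zero] at hkey
    have hsplit : ∫ s in (0:ℝ)..ℓ, φ s = A - E - 2*B := by
      simp only [hφ]
      rw [integral_sub ((hconta.intervalIntegrable 0 ℓ).sub hEint)
        (hcontb.intervalIntegrable 0 ℓ),
        integral_sub (hconta.intervalIntegrable 0 ℓ) hEint, intervalIntegral.integral_const_mul]
    have hFl : F ℓ = (f ℓ)^2 * ((Real.cosh ℓ)^2)⁻¹ / Real.tanh ℓ := by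
      simp only [hF]
      rw [mul_div_assoc]
    rw [hsplit, hFl] at hkey
    linarith
  -- derivative of g
  have hgder : ∀ x : ℝ, 0 < x →
      HasDerivAt g ((Real.cosh x / Real.sinh x) * h x) x := by
    intro x hx
    have ht := aux_tanh_pos hx
    have hsi := Real.sinh_pos_iff.2 hx
    have hco := Real.cosh_pos x
    have hd := (hfd x).div (hasDerivAt_tanh' x) (ne_of_gt ht)
    rw [hg]
    refine hd.congr_deriv ?_
    simp only [hh]
    rw [Real.tanh_eq_sinh_div_cosh]
    field_simp
  -- pointwise distance bound (ordered version)
  have hS : ∀ y x : ℝ, 0 < y → y ≤ x → x ≤ ℓ →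
      (g x - g y)^2 ≤ (x + Real.cosh y / Real.sinh y) * E := by
    intro y x hy hyx hxl
    have hposIcc : ∀ s ∈ uIcc y x, 0 < s := by
      rw [uIcc_of_le hyx]
      intro s hs
      exact lt_of_lt_of_le hy hs.1
    have hcothcont : ContinuousOn (fun s => Real.cosh s / Real.sinh s) (uIcc y x) :=
      ContinuousOn.div Real.continuous_cosh.continuousOn Real.continuous_sinh.continuousOn
        fun s hs => ne_of_gt (Real.sinh_pos_iff.2 (hposIcc s hs))
    have hhcont' : ContinuousOn h (uIcc y x) := hhcont.mono fun s hs => hposIcc s hs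
    have hint : IntervalIntegrable (fun s => (Real.cosh s / Real.sinh s) * h s) volume y x :=
      (hcothcont.mul hhcont').intervalIntegrable
    have hftc : ∫ s in y..x, (Real.cosh s / Real.sinh s) * h s = g x - g y :=
      integral_eq_sub_of_hasDerivAt (fun s hs => hgder s (hposIcc s hs)) hint
    have hU2 : IntervalIntegrable (fun s => (Real.cosh s / Real.sinh s)^2) volume y x :=
      (hcothcont.pow 2).intervalIntegrable
    have hV2 : IntervalIntegrable (fun s => (h s)^2) volume y x :=
      (hhcont'.pow 2).intervalIntegrable
    have hcs := cs_interval hyx hU2 hV2 hint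
    rw [hftc] at hcs
    have h1 := integral_coth_sq hy hyx
    have hcothx : (0:ℝ) ≤ Real.cosh x / Real.sinh x :=
      div_nonneg (Real.cosh_pos x).le (Real.sinh_pos_iff.2 (lt_of_lt_of_le hy hyx)).le
    have hcothy : (0:ℝ) ≤ Real.cosh y / Real.sinh y :=
      div_nonneg (Real.cosh_pos y).le (Real.sinh_pos_iff.2 hy).le
    have h2 : ∫ s in y..x, (Real.cosh s / Real.sinh s)^2 ≤ x + Real.cosh y / Real.sinh y := by
      rw [h1]
      linarith [hy.le]
    have h3 : ∫ s in y..x, (h s)^2 ≤ E := by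
      rw [hE]
      exact integral_mono_interval hy.le hyx hxl
        (ae_of_all _ fun s => sq_nonneg _) hEint
    have h4 : (0:ℝ) ≤ ∫ s in y..x, (Real.cosh s / Real.sinh s)^2 :=
      integral_nonneg hyx fun u _ => sq_nonneg _
    have h5 : (0:ℝ) ≤ ∫ s in y..x, (h s)^2 :=
      integral_nonneg hyx fun u _ => sq_nonneg _
    calc (g x - g y)^2 ≤ (∫ s in y..x, (Real.cosh s / Real.sinh s)^2) * ∫ s in y..x, (h s)^2 :=
          hcs
      _ ≤ (x + Real.cosh y / Real.sinh y) * E := by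
          apply mul_le_mul h2 h3 h5
          linarith
  -- m facts
  have hmw : ∫ s in (0:ℝ)..ℓ, w s = m := integral_w
  have htl : (9/10 : ℝ) ≤ Real.tanh ℓ := by
    have hexp : (33:ℝ) ≤ Real.exp ℓ := le_trans (by linarith) (Real.add_one_le_exp ℓ)
    have hexp2 : Real.exp (-ℓ) ≤ 1 := Real.exp_le_one_iff.2 (by linarith)
    have hco := Real.cosh_pos ℓ
    rw [Real.tanh_eq_sinh_div_cosh, le_div_iff₀ hco]
    rw [Real.sinh_eq, Real.cosh_eq]
    nlinarith [Real.exp_pos (-ℓ)]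
  have hm5 : 1/5 ≤ m := by
    have h3 : (9/10:ℝ)^3 ≤ Real.tanh ℓ ^ 3 := pow_le_pow_left₀ (by norm_num) htl 3
    rw [hm]
    nlinarith [h3]
  have hm3 : m ≤ 1/3 := by
    have h3 : Real.tanh ℓ ^ 3 ≤ 1 := pow_le_one₀ (aux_tanh_nonneg hl0') (aux_tanh_le_one ℓ)
    rw [hm]
    linarith
  have hm0 : (0:ℝ) < m := lt_of_lt_of_le (by norm_num) hm5
  -- shared integral facts
  have hwcont : Continuous w := by
    rw [hw]
    exact (continuous_tanh'.pow 2).mul cont_sech2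
  have hwnn : ∀ y : ℝ, 0 ≤ w y := by
    intro y
    rw [hw]
    positivity
  have hIxw_le : ∫ y in (0:ℝ)..ℓ, y * w y ≤ 1 := by
    have hmono : ∫ y in (0:ℝ)..ℓ, y * w y ≤ ∫ y in (0:ℝ)..ℓ, y * (Real.cosh y ^ 2)⁻¹ := by
      apply integral_mono_on hl0' ((continuous_id.mul hwcont).intervalIntegrable 0 ℓ)
        ((continuous_id.mul cont_sech2).intervalIntegrable 0 ℓ)
      intro y hy
      have hwle : w y ≤ (Real.cosh y ^ 2)⁻¹ := by
        simp only [hw]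
        exact mul_le_of_le_one_left (by positivity)
          (pow_le_one₀ (aux_tanh_nonneg hy.1) (aux_tanh_le_one y))
      exact mul_le_mul_of_nonneg_left hwle hy.1
    exact le_trans hmono (integral_xsech_le hl0')
  have htsech_le : Real.tanh ℓ ^ 2 / 2 ≤ 1/2 := by
    nlinarith [aux_tanh_le_one ℓ, aux_tanh_nonneg hl0']
  -- main pointwise estimate
  have hstar : ∀ x : ℝ, 0 < x → x ≤ ℓ →
      (m * g x)^2 ≤ m * E * ((x + Real.cosh x / Real.sinh x) * m + 3/2) := by
    intro x hx0 hxl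
    set Gx := g x with hGx
    set v : ℝ → ℝ := fun y => Real.tanh y * (Real.cosh y)⁻¹ with hv
    have hvcont : Continuous v := by
      rw [hv]
      exact continuous_tanh'.mul (Real.continuous_cosh.inv₀ fun y => ne_of_gt (Real.cosh_pos y))
    have hv2 : ∀ y : ℝ, v y ^ 2 = w y := by
      intro y
      simp only [hv, hw]
      rw [mul_pow, inv_pow]
    set U : ℝ → ℝ := fun y => (Gx - g y) * v y with hU
    set ψ1 : ℝ → ℝ := fun y => Gx * w y - f y * Real.tanh y * (Real.cosh y ^ 2)⁻¹ with hψ1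
    set ψ2 : ℝ → ℝ := fun y => Gx ^ 2 * w y
      - 2 * Gx * (f y * Real.tanh y * (Real.cosh y ^ 2)⁻¹) + f y ^ 2 * (Real.cosh y ^ 2)⁻¹
      with hψ2
    have hψ1cont : Continuous ψ1 := by
      rw [hψ1]
      exact (continuous_const.mul hwcont).sub
        ((hfc.mul continuous_tanh').mul cont_sech2)
    have hψ2cont : Continuous ψ2 := by
      rw [hψ2]
      exact ((continuous_const.mul hwcont).sub
        (continuous_const.mul ((hfc.mul continuous_tanh').mul cont_sech2))).add
        ((hfc.pow 2).mul cont_sech2)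
    have heq1 : ∀ y ∈ Icc (0:ℝ) ℓ, U y * v y = ψ1 y := by
      intro y hy
      rcases eq_or_lt_of_le hy.1 with h0 | h0
      · rw [← h0]
        simp [hU, hv, hψ1, hw, hf0]
      · have ht := aux_tanh_pos h0
        have hco := Real.cosh_pos y
        have htx := aux_tanh_pos hx0
        simp only [hU, hv, hψ1, hw, hg, hGx]
        field_simp
    have heq2 : ∀ y ∈ Icc (0:ℝ) ℓ, U y ^ 2 = ψ2 y := by
      intro y hy
      rcases eq_or_lt_of_le hy.1 with h0 | h0
      · rw [← h0]
        simp [hU, hv, hψ2, hw, hf0]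
      · have ht := aux_tanh_pos h0
        have hco := Real.cosh_pos y
        have htx := aux_tanh_pos hx0
        simp only [hU, hv, hψ2, hw, hg, hGx]
        field_simp
        ring
    have hintUV : IntervalIntegrable (fun y => U y * v y) volume 0 ℓ :=
      intervalIntegrable_congr_Icc hl0' heq1 (hψ1cont.intervalIntegrable 0 ℓ)
    have hintU2 : IntervalIntegrable (fun y => U y ^ 2) volume 0 ℓ :=
      intervalIntegrable_congr_Icc hl0' heq2 (hψ2cont.intervalIntegrable 0 ℓ)
    have hintV2 : IntervalIntegrable (fun y => v y ^ 2) volume 0 ℓ :=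
      intervalIntegrable_congr_Icc hl0' (fun y _ => hv2 y) (hwcont.intervalIntegrable 0 ℓ)
    have hIv2 : ∫ y in (0:ℝ)..ℓ, v y ^ 2 = m := by
      rw [integral_congr (g := w) fun y _ => hv2 y]
      exact hmw
    have hIUV : ∫ y in (0:ℝ)..ℓ, U y * v y = m * Gx := by
      have : ∫ y in (0:ℝ)..ℓ, U y * v y = ∫ y in (0:ℝ)..ℓ, ψ1 y := by
        apply integral_congr
        intro y hy
        exact heq1 y (by rwa [uIcc_of_le hl0'] at hy)
      rw [this]
      simp only [hψ1]
      rw [integral_sub (f := fun y => Gx * w y) (g := fun y => f y * Real.tanh y * (Real.cosh y ^ 2)⁻¹) ((continuous_const.mul hwcont).intervalIntegrable 0 ℓ)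
        (((hfc.mul continuous_tanh').mul cont_sech2).intervalIntegrable 0 ℓ),
        intervalIntegral.integral_const_mul, hmw, horth, sub_zero, mul_comm]
    have hcs := cs_interval hl0' hintU2 hintV2 hintUV
    rw [hIUV, hIv2] at hcs
    -- bound the middle integral
    set Θ : ℝ → ℝ := fun y => E * ((x + Real.cosh x / Real.sinh x) * w y
      + (y * w y + Real.tanh y * (Real.cosh y ^ 2)⁻¹)) with hΘ
    have hΘcont : Continuous Θ := by
      rw [hΘ]
      exact continuous_const.mul ((continuous_const.mul hwcont).add
        ((continuous_id.mul hwcont).add (continuous_tanh'.mul cont_sech2)))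
    have hcx : (0:ℝ) ≤ Real.cosh x / Real.sinh x :=
      div_nonneg (Real.cosh_pos x).le (Real.sinh_pos_iff.2 hx0).le
    have hptw : ∀ y ∈ Icc (0:ℝ) ℓ, ψ2 y ≤ Θ y := by
      intro y hy
      rcases eq_or_lt_of_le hy.1 with h0 | h0
      · rw [← h0]
        simp [hψ2, hΘ, hw, hf0]
      · have ht := aux_tanh_pos h0
        have hco := Real.cosh_pos y
        have hsi := Real.sinh_pos_iff.2 h0
        have htx := aux_tanh_pos hx0
        have hrw : ψ2 y = (Gx - g y)^2 * w y := by
          simp only [hψ2, hw, hg]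
          field_simp
          ring
        have hcy : (0:ℝ) ≤ Real.cosh y / Real.sinh y :=
          div_nonneg (Real.cosh_pos y).le hsi.le
        have hd2 : (Gx - g y)^2
            ≤ (x + Real.cosh x / Real.sinh x + y + Real.cosh y / Real.sinh y) * E := by
          rcases le_total y x with hyx | hxy
          · have hb := hS y x h0 hyx hxl
            rw [hGx]
            refine le_trans hb ?_
            apply mul_le_mul_of_nonneg_right ?_ hE0
            linarith [h0.le]
          · have hb := hS x y hx0 hxy hy.2
            have heven : (Gx - g y)^2 = (g y - g x)^2 := by
              rw [hGx]; ring
            rw [heven]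
            refine le_trans hb ?_
            apply mul_le_mul_of_nonneg_right ?_ hE0
            linarith [hx0.le]
        have hcw : Real.cosh y / Real.sinh y * w y = Real.tanh y * (Real.cosh y ^ 2)⁻¹ := by
          simp only [hw]
          rw [Real.tanh_eq_sinh_div_cosh]
          field_simp
        calc ψ2 y = (Gx - g y)^2 * w y := hrw
          _ ≤ ((x + Real.cosh x / Real.sinh x + y + Real.cosh y / Real.sinh y) * E) * w y :=
              mul_le_mul_of_nonneg_right hd2 (hwnn y)
          _ = Θ y := by
              simp only [hΘ]
              rw [← hcw]
              ring
    have hIψ2 : ∫ y in (0:ℝ)..ℓ, U y ^ 2 = ∫ y in (0:ℝ)..ℓ, ψ2 y := by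
      apply integral_congr
      intro y hy
      exact heq2 y (by rwa [uIcc_of_le hl0'] at hy)
    have hmono := integral_mono_on (μ := volume) hl0' (hψ2cont.intervalIntegrable 0 ℓ)
      (hΘcont.intervalIntegrable 0 ℓ) hptw
    have hIΘ : ∫ y in (0:ℝ)..ℓ, Θ y
        ≤ E * ((x + Real.cosh x / Real.sinh x) * m + 3/2) := by
      simp only [hΘ]
      rw [intervalIntegral.integral_const_mul]
      have i1 : IntervalIntegrable (fun y => (x + Real.cosh x / Real.sinh x) * w y) volume 0 ℓ :=
        (continuous_const.mul hwcont).intervalIntegrable 0 ℓ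
      have i2 : IntervalIntegrable (fun y : ℝ => y * w y) volume 0 ℓ :=
        (continuous_id.mul hwcont).intervalIntegrable 0 ℓ
      have i3 : IntervalIntegrable (fun y : ℝ => Real.tanh y * (Real.cosh y ^ 2)⁻¹) volume 0 ℓ :=
        (continuous_tanh'.mul cont_sech2).intervalIntegrable 0 ℓ
      rw [integral_add i1 (i2.add i3), integral_add i2 i3, intervalIntegral.integral_const_mul, hmw,
        integral_tsech]
      apply mul_le_mul_of_nonneg_left ?_ hE0
      linarith [hIxw_le, htsech_le]
    calc (m * Gx)^2 ≤ (∫ y in (0:ℝ)..ℓ, U y ^ 2) * m := hcs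
      _ ≤ (E * ((x + Real.cosh x / Real.sinh x) * m + 3/2)) * m := by
          apply mul_le_mul_of_nonneg_right ?_ hm0.le
          rw [hIψ2]
          exact le_trans hmono hIΘ
      _ = m * E * ((x + Real.cosh x / Real.sinh x) * m + 3/2) := by ring
  have hBle : B ≤ 3 * E := by
    have hptw : ∀ x ∈ Icc (0:ℝ) ℓ, m^2 * (f x ^ 2 * (Real.cosh x ^ 2)⁻¹)
        ≤ m * E * (m * (x * w x + Real.tanh x * (Real.cosh x ^ 2)⁻¹) + 3/2 * w x) := by
      intro x hx
      rcases eq_or_lt_of_le hx.1 with h0 | h0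
      · rw [← h0]
        simp [hw, hf0]
      · have hst := hstar x h0 hx.2
        have ht := aux_tanh_pos h0
        have hsi := Real.sinh_pos_iff.2 h0
        have hco := Real.cosh_pos x
        have hmul := mul_le_mul_of_nonneg_right hst (hwnn x)
        have hL : (m * g x)^2 * w x = m^2 * (f x ^ 2 * (Real.cosh x ^ 2)⁻¹) := by
          simp only [hg, hw]
          field_simp
        have hR : m * E * ((x + Real.cosh x / Real.sinh x) * m + 3/2) * w x
            = m * E * (m * (x * w x + Real.tanh x * (Real.cosh x ^ 2)⁻¹) + 3/2 * w x) := by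
          have hcw : Real.cosh x / Real.sinh x * w x = Real.tanh x * (Real.cosh x ^ 2)⁻¹ := by
            simp only [hw]
            rw [Real.tanh_eq_sinh_div_cosh]
            field_simp
          rw [← hcw]
          simp only [hw]
          ring
        rw [hL, hR] at hmul
        exact hmul
    have i2' : IntervalIntegrable (fun x : ℝ => x * w x) volume 0 ℓ :=
      (continuous_id.mul hwcont).intervalIntegrable 0 ℓ
    have i3' : IntervalIntegrable (fun x : ℝ => Real.tanh x * (Real.cosh x ^ 2)⁻¹) volume 0 ℓ :=
      (continuous_tanh'.mul cont_sech2).intervalIntegrable 0 ℓ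
    have i4 : IntervalIntegrable
        (fun x : ℝ => m * (x * w x + Real.tanh x * (Real.cosh x ^ 2)⁻¹)) volume 0 ℓ :=
      (continuous_const.mul ((continuous_id.mul hwcont).add
        (continuous_tanh'.mul cont_sech2))).intervalIntegrable 0 ℓ
    have i5 : IntervalIntegrable (fun x : ℝ => 3/2 * w x) volume 0 ℓ :=
      (continuous_const.mul hwcont).intervalIntegrable 0 ℓ
    have hint1 : IntervalIntegrable (fun x => m^2 * (f x ^ 2 * (Real.cosh x ^ 2)⁻¹)) volume 0 ℓ :=
      (continuous_const.mul ((hfc.pow 2).mul cont_sech2)).intervalIntegrable 0 ℓ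
    have hint2 : IntervalIntegrable
        (fun x => m * E * (m * (x * w x + Real.tanh x * (Real.cosh x ^ 2)⁻¹) + 3/2 * w x))
        volume 0 ℓ :=
      (continuous_const.mul ((continuous_const.mul ((continuous_id.mul hwcont).add
        (continuous_tanh'.mul cont_sech2))).add
        (continuous_const.mul hwcont))).intervalIntegrable 0 ℓ
    have hmono := integral_mono_on (μ := volume) hl0' hint1 hint2 hptw
    rw [intervalIntegral.integral_const_mul] at hmono
    rw [intervalIntegral.integral_const_mul, integral_add i4 i5, intervalIntegral.integral_const_mul, integral_add i2' i3',
      integral_tsech, intervalIntegral.integral_const_mul, hmw] at hmono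
    have hfin : m^2 * B ≤ 3 * (m^2 * E) := by
      have hIxw_nn : (0:ℝ) ≤ ∫ y in (0:ℝ)..ℓ, y * w y :=
        integral_nonneg hl0' fun u hu => mul_nonneg hu.1 (hwnn u)
      nlinarith [hmono, hIxw_le, htsech_le, hE0, hm0.le, hm5,
        mul_le_mul_of_nonneg_left hIxw_le (mul_nonneg hm0.le hE0),
        mul_le_mul_of_nonneg_left htsech_le (mul_nonneg hm0.le hE0)]
    have hm2 : (0:ℝ) < m^2 := by positivity
    have h2 : m^2 * B ≤ m^2 * (3 * E) := by linarith [hfin]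
    exact le_of_mul_le_mul_left h2 hm2
  have hCle : (f ℓ)^2 * ((Real.cosh ℓ)^2)⁻¹ / Real.tanh ℓ ≤ E := by
    have hst := hstar ℓ hl0 le_rfl
    have ht := aux_tanh_pos hl0
    have hsi := Real.sinh_pos_iff.2 hl0
    have hco := Real.cosh_pos ℓ
    have hexp : (33:ℝ) ≤ Real.exp ℓ := le_trans (by linarith) (Real.add_one_le_exp ℓ)
    have hexp2 : Real.exp (-ℓ) ≤ 1 := Real.exp_le_one_iff.2 (by linarith)
    have hcoth2 : Real.cosh ℓ / Real.sinh ℓ ≤ 2 := by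
      rw [div_le_iff₀ hsi, Real.cosh_eq, Real.sinh_eq]
      nlinarith [Real.exp_pos (-ℓ)]
    have hcothnn : (0:ℝ) ≤ Real.cosh ℓ / Real.sinh ℓ := div_nonneg hco.le hsi.le
    have hg2 : (g ℓ)^2 ≤ E * (ℓ + 10) := by
      have h1 : m^2 * (g ℓ)^2 ≤ m * E * ((ℓ + Real.cosh ℓ / Real.sinh ℓ) * m + 3/2) := by
        nlinarith [hst]
      have hEc : m * E * ((ℓ + Real.cosh ℓ / Real.sinh ℓ) * m + 3/2)
          ≤ m^2 * (E * (ℓ + 10)) := by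
        have hcm : Real.cosh ℓ / Real.sinh ℓ * m ≤ 2 * m :=
          mul_le_mul_of_nonneg_right hcoth2 hm0.le
        nlinarith [hE0, hm5, hm0.le, hcm, hl0.le,
          mul_le_mul_of_nonneg_left hcm (mul_nonneg hm0.le hE0),
          mul_le_mul_of_nonneg_left hm5 (mul_nonneg hm0.le hE0)]
      have h2 : m^2 * (g ℓ)^2 ≤ m^2 * (E * (ℓ + 10)) := le_trans h1 hEc
      have hm2 : (0:ℝ) < m^2 := by positivity
      exact le_of_mul_le_mul_left h2 hm2
    have hCeq : (f ℓ)^2 * ((Real.cosh ℓ)^2)⁻¹ / Real.tanh ℓ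
        = (g ℓ)^2 * (Real.tanh ℓ * (Real.cosh ℓ ^ 2)⁻¹) := by
      simp only [hg]
      field_simp
    have hts : Real.tanh ℓ * (Real.cosh ℓ ^ 2)⁻¹ ≤ 4 / Real.exp ℓ ^ 2 := by
      have h1 : Real.exp ℓ ^ 2 / 4 ≤ Real.cosh ℓ ^ 2 := by
        nlinarith [aux_exp_le_cosh ℓ, Real.exp_pos ℓ]
      have h2 : (Real.cosh ℓ ^ 2)⁻¹ ≤ 4 / Real.exp ℓ ^ 2 := by
        have h3 : (Real.cosh ℓ ^ 2)⁻¹ ≤ (Real.exp ℓ ^ 2 / 4)⁻¹ :=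
          inv_anti₀ (by positivity) h1
        rw [inv_div] at h3
        exact h3
      calc Real.tanh ℓ * (Real.cosh ℓ ^ 2)⁻¹ ≤ 1 * (Real.cosh ℓ ^ 2)⁻¹ :=
            mul_le_mul_of_nonneg_right (aux_tanh_le_one ℓ) (by positivity)
        _ = (Real.cosh ℓ ^ 2)⁻¹ := one_mul _
        _ ≤ 4 / Real.exp ℓ ^ 2 := h2
    have hfactor : (ℓ + 10) * (4 / Real.exp ℓ ^ 2) ≤ 1 := by
      rw [mul_div_assoc']
      rw [div_le_one (by positivity)]
      nlinarith [hexp, Real.add_one_le_exp ℓ, hl]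
    calc (f ℓ)^2 * ((Real.cosh ℓ)^2)⁻¹ / Real.tanh ℓ
        = (g ℓ)^2 * (Real.tanh ℓ * (Real.cosh ℓ ^ 2)⁻¹) := hCeq
      _ ≤ (E * (ℓ + 10)) * (4 / Real.exp ℓ ^ 2) := by
          apply mul_le_mul hg2 hts (by positivity) ?_
          have : (0:ℝ) ≤ ℓ + 10 := by linarith
          exact mul_nonneg hE0 this
      _ = E * ((ℓ + 10) * (4 / Real.exp ℓ ^ 2)) := by ring
      _ ≤ E * 1 := mul_le_mul_of_nonneg_left hfactor hE0
      _ = E := mul_one E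
  have hBnn : 0 ≤ B := by
    rw [hB]
    apply integral_nonneg hl0'
    intro u _
    positivity
  rw [← hid]
  have h201 : (1 - 2 / (2 + 1/100) : ℝ) = 1/201 := by norm_num
  rw [h201]
  have hACb : A = E + 2*B + (f ℓ)^2 * ((Real.cosh ℓ)^2)⁻¹ / Real.tanh ℓ := by
    rw [hid]; ring
  rw [hACb]
  linarith
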